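/- For every n ≥ 1, the map sending an odd divisor d of n to the pair (a, h) = (n/d − (d+1)/2, d) is a bijection from the set of odd divisors of n onto the set of pairs (a, h) with h ≥ 1 odd and h(h + 2a + 1) = 2n. -/
import Mathlib

theorem stmt_13 (n : ℤ) (hn : 1 ≤ n) :
    Set.BijOn (fun d : ℤ => (n / d - (d + 1) / 2, d))
      {d : ℤ | 0 < d ∧ Odd d ∧ d ∣ n}
      {p : ℤ × ℤ | 0 < p.2 ∧ Odd p.2 ∧ p.2 * (p.2 + 2 * p.1 + 1) = 2 * n} := by
  constructor
  · rintro d ⟨hd0, ⟨k, hk⟩, hdvd⟩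
    refine ⟨hd0, ⟨k, hk⟩, ?_⟩
    obtain ⟨m, hm⟩ := hdvd
    have hdne : d ≠ 0 := hd0.ne'
    have h1 : n / d = m := by rw [hm]; exact Int.mul_ediv_cancel_left m hdne
    have h2 : (d + 1) / 2 = k + 1 := by omega
    show d * (d + 2 * (n / d - (d + 1) / 2) + 1) = 2 * n
    rw [h1, h2, hm]
    have h3 : d + 2 * (m - (k + 1)) + 1 = 2 * m := by omega
    rw [h3]; ring
  constructor
  · rintro d₁ _ d₂ _ h
    simpa using congrArg Prod.snd h
  · rintro ⟨a, h⟩ ⟨hh0, ⟨k, hk⟩, heq⟩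
    have hm : n = h * (k + a + 1) := by
      have e : h + 2 * a + 1 = 2 * (k + a + 1) := by omega
      rw [e] at heq
      linarith
    refine ⟨h, ⟨hh0, ⟨k, hk⟩, ⟨k + a + 1, hm⟩⟩, ?_⟩
    have h1 : n / h = k + a + 1 := by
      rw [hm]; exact Int.mul_ediv_cancel_left _ hh0.ne'
    have h2 : (h + 1) / 2 = k + 1 := by omega
    show (n / h - (h + 1) / 2, h) = (a, h)
    rw [h1, h2]
    simp only [Prod.mk.injEq]

    exact ⟨by ring, trivial⟩
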